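/- Let F ⊆ K be finite fields with |F| = q and [K : F] = n. If q is even, or if both q and n are odd, then K has a self-dual basis over F: there exists an F-basis (b₀, …, b_{n−1}) of K such that Tr_{K/F}(b_i·b_j) = 1 when i = j and Tr_{K/F}(b_i·b_j) = 0 when i ≠ j. -/

import Mathlib

open Module Polynomial

section SelfDualAux

lemma roots_bound {L : Type*} [Field L] (e : ℕ) (he : 2 ≤ e) (S : Finset L)
    (hS : ∀ x ∈ S, x ^ e = x) : S.card ≤ e := by
  classical
  set f : L[X] := X ^ e - X with hf
  have hdeg : f.degree = (e : WithBot ℕ) := by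
    rw [hf, degree_sub_eq_left_of_degree_lt, degree_X_pow]
    rw [degree_X_pow, degree_X]
    exact_mod_cast lt_of_lt_of_le one_lt_two he
  have hne : f ≠ 0 := by
    intro h; rw [h, degree_zero] at hdeg; exact (by simp at hdeg)
  have hnat : f.natDegree = e := natDegree_eq_of_degree_eq_some hdeg
  have hsub : S ⊆ f.roots.toFinset := by
    intro x hx
    rw [Multiset.mem_toFinset, mem_roots']
    exact ⟨hne, by simp [f, IsRoot, hS x hx, sub_eq_zero]⟩
  calc S.card ≤ f.roots.toFinset.card := Finset.card_le_card hsub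
    _ ≤ Multiset.card f.roots := Multiset.toFinset_card_le _
    _ ≤ f.natDegree := card_roots' f
    _ = e := hnat

private lemma finRotate_val {N : ℕ} (hN : 0 < N) (j : Fin N) :
    ((finRotate N) j).val = (j.val + 1) % N := by
  cases N with
  | zero => omega
  | succ n =>
    rw [finRotate_succ_apply, Fin.val_add_one]
    by_cases h : j = Fin.last n
    · rw [if_pos h, h]; simp
    · rw [if_neg h]
      have hj : j.val < n := by
        have h1 : j.val < n + 1 := j.isLt
        rcases Nat.lt_or_ge j.val n with h2 | h2
        · exact h2
        · exact absurd (Fin.ext (by omega : j.val = n)) h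
      rw [Nat.mod_eq_of_lt (by omega)]

private lemma sign_finRotate_odd {N : ℕ} (h : Odd N) : Equiv.Perm.sign (finRotate N) = 1 := by
  cases N with
  | zero => simp at h
  | succ n =>
    rw [sign_finRotate]
    have h1 := Nat.odd_iff.mp h
    exact Even.neg_one_pow (Nat.even_iff.mpr (by omega))


variable {F K : Type*} [Field F] [Fintype F] [Field K] [Fintype K] [Algebra F K]

private lemma trace_symm (x y : K) :
    Algebra.traceForm F K x y = Algebra.traceForm F K y x := by
  simpa using (Algebra.traceForm_isSymm F (S := K)).eq x y

/-- Splitting off the orthogonal complement of a vector of norm 1. -/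
private lemma step (W : Submodule F K)
    (hnd : ∀ x ∈ W, (∀ y ∈ W, Algebra.traceForm F K x y = 0) → x = 0)
    (e : K) (heW : e ∈ W) (hee : Algebra.traceForm F K e e = 1) :
    (∀ x ∈ W ⊓ LinearMap.ker (Algebra.traceForm F K e),
      (∀ y ∈ W ⊓ LinearMap.ker (Algebra.traceForm F K e), Algebra.traceForm F K x y = 0) → x = 0)
    ∧ finrank F ↥(W ⊓ LinearMap.ker (Algebra.traceForm F K e)) + 1 = finrank F ↥W := by
  classical
  set B := Algebra.traceForm F K with hBdef
  set W' := W ⊓ LinearMap.ker (B e) with hW'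
  have he0 : e ≠ 0 := by
    intro h; rw [h] at hee; simp at hee
  have hsub : W' ≤ W := inf_le_left
  have hker : ∀ x ∈ W', B e x = 0 := fun x hx => hx.2
  have hsup : Submodule.span F {e} ⊔ W' = W := by
    apply le_antisymm
    · exact sup_le ((Submodule.span_singleton_le_iff_mem _ _).mpr heW) hsub
    · intro y hy
      have h1 : B e y • e ∈ Submodule.span F {e} :=
        Submodule.smul_mem _ _ (Submodule.mem_span_singleton_self e)
      have h2 : y - B e y • e ∈ W' := by
        refine ⟨Submodule.sub_mem _ hy (Submodule.smul_mem _ _ heW), ?_⟩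
        simp [LinearMap.mem_ker, hee]
      exact Submodule.mem_sup.mpr ⟨_, h1, _, h2, by abel⟩
  have hinf : Submodule.span F {e} ⊓ W' = ⊥ := by
    rw [Submodule.eq_bot_iff]
    rintro x ⟨hx1, hx2⟩
    obtain ⟨c, rfl⟩ := Submodule.mem_span_singleton.mp hx1
    have := hker _ hx2
    simp only [map_smul, smul_eq_mul, hee, mul_one] at this
    rw [this, zero_smul]
  constructor
  · intro x hx hxall
    refine hnd x (hsub hx) (fun y hy => ?_)
    rw [← hsup] at hy
    obtain ⟨a, ha, b, hb, rfl⟩ := Submodule.mem_sup.mp hy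
    obtain ⟨c, rfl⟩ := Submodule.mem_span_singleton.mp ha
    rw [map_add, map_smul, smul_eq_mul, trace_symm x e, hker x hx, mul_zero, zero_add]
    exact hxall b hb
  · have := Submodule.finrank_sup_add_finrank_inf_eq (Submodule.span F {e}) W'
    rw [hsup, hinf, finrank_bot, finrank_span_singleton he0, add_zero, add_comm] at this
    omega

lemma char2_family (h2 : ringChar F = 2) :
    ∀ k (W : Submodule F K), finrank F ↥W = k →
      (∀ x ∈ W, (∀ y ∈ W, Algebra.traceForm F K x y = 0) → x = 0) →
      (∃ x ∈ W, Algebra.traceForm F K x x ≠ 0) →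
      ∃ v : Fin k → K, (∀ i, v i ∈ W) ∧
        ∀ i j, Algebra.traceForm F K (v i) (v j) = if i = j then 1 else 0 := by
  classical
  have h2F : (2 : F) = 0 := by
    have := ringChar.charP F; rw [h2] at this; exact CharP.cast_eq_zero F 2
  intro k
  induction k using Nat.strong_induction_on with
  | _ k IH =>
  intro W hWk hnd hex
  obtain ⟨x, hxW, hxx⟩ := hex
  set B := Algebra.traceForm F K with hBdef
  -- normalize x to norm 1
  obtain ⟨r, hr⟩ := FiniteField.isSquare_of_char_two h2 (B x x)
  have hr0 : r ≠ 0 := by rintro rfl; rw [mul_zero] at hr; exact hxx hr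
  set e1 : K := r⁻¹ • x with he1def
  have he1W : e1 ∈ W := Submodule.smul_mem _ _ hxW
  have he1 : B e1 e1 = 1 := by
    simp only [he1def, map_smul, LinearMap.smul_apply, smul_eq_mul]
    rw [hr]; field_simp
  -- k ≥ 1
  rcases k with - | k'
  · exfalso
    have : W = ⊥ := Submodule.finrank_eq_zero.mp hWk
    rw [this, Submodule.mem_bot] at hxW
    rw [hxW] at hxx
    simp at hxx
  obtain ⟨hnd1, hrk1⟩ := step W hnd e1 he1W he1
  set W₁ := W ⊓ LinearMap.ker (B e1) with hW₁def
  have hW₁W : W₁ ≤ W := inf_le_left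
  have hW₁k : finrank F ↥W₁ = k' := by omega
  have hW₁perp : ∀ y ∈ W₁, B e1 y = 0 := fun y hy => hy.2
  by_cases hiso : ∃ y ∈ W₁, B y y ≠ 0
  · -- Case A
    obtain ⟨v', hv'W, hv'⟩ := IH k' (Nat.lt_succ_self _) W₁ hW₁k hnd1 hiso
    refine ⟨Fin.cons e1 v', ?_, ?_⟩
    · intro i
      refine Fin.cases ?_ ?_ i
      · exact he1W
      · exact fun j => hW₁W (hv'W j)
    · intro i j
      refine Fin.cases ?_ ?_ i
      · refine Fin.cases ?_ ?_ j
        · simp [he1]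
        · intro j'
          simp only [Fin.cons_zero, Fin.cons_succ]
          rw [hW₁perp _ (hv'W j'), if_neg (Fin.succ_ne_zero j').symm]
      · intro i'
        refine Fin.cases ?_ ?_ j
        · simp only [Fin.cons_zero, Fin.cons_succ]
          rw [trace_symm, hW₁perp _ (hv'W i'), if_neg (Fin.succ_ne_zero i')]
        · intro j'
          simp only [Fin.cons_succ]
          rw [hv' i' j']
          by_cases h : i' = j' <;> simp [h, Fin.succ_inj]
  · -- Case B : W₁ is totally isotropic
    push_neg at hiso
    rcases k' with - | k''
    · -- k = 1
      refine ⟨fun _ => e1, fun _ => he1W, fun i j => ?_⟩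
      have : i = j := Fin.ext (by omega)
      simp [this, he1]
    · -- dim W₁ ≥ 1 : find hyperbolic pair
      have hW₁ne : W₁ ≠ ⊥ := by
        intro h; rw [h, finrank_bot] at hW₁k; omega
      obtain ⟨u, huW₁, hu0⟩ := Submodule.exists_mem_ne_zero_of_ne_bot hW₁ne
      obtain ⟨z, hzW₁, hz⟩ : ∃ z ∈ W₁, B u z ≠ 0 := by
        by_contra h; push_neg at h; exact hu0 (hnd1 u huW₁ h)
      set w : K := (B u z)⁻¹ • z with hwdef
      have hwW₁ : w ∈ W₁ := Submodule.smul_mem _ _ hzW₁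
      have huw : B u w = 1 := by
        rw [hwdef, map_smul, smul_eq_mul, inv_mul_cancel₀ hz]
      have hwu : B w u = 1 := by rw [trace_symm]; exact huw
      have huu : B u u = 0 := hiso u huW₁
      have hww : B w w = 0 := hiso w hwW₁
      have he1u : B e1 u = 0 := hW₁perp u huW₁
      have he1w : B e1 w = 0 := hW₁perp w hwW₁
      have hue1 : B u e1 = 0 := by rw [trace_symm]; exact he1u
      have hwe1 : B w e1 = 0 := by rw [trace_symm]; exact he1w
      set f1 : K := e1 + u with hf1
      set f2 : K := e1 + w with hf2
      set f3 : K := e1 + u + w with hf3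
      have h2K : ∀ a : F, a + a = 0 := by
        intro a
        have : (2 : F) * a = 0 := by rw [h2F, zero_mul]
        rw [two_mul] at this; exact this
      have hB11 : B f1 f1 = 1 := by
        simp only [hf1, map_add, LinearMap.add_apply, he1, he1u, hue1, huu]; ring
      have hB22 : B f2 f2 = 1 := by
        simp only [hf2, map_add, LinearMap.add_apply, he1, he1w, hwe1, hww]; ring
      have hB33 : B f3 f3 = 1 := by
        simp only [hf3, map_add, LinearMap.add_apply, he1, he1u, he1w, hue1, hwe1, huu, hww, huw, hwu]
        have := h2K 1; linear_combination this
      have hB12 : B f1 f2 = 0 := by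
        simp only [hf1, hf2, map_add, LinearMap.add_apply, he1, he1w, hue1, huw]
        have := h2K 1; linear_combination this
      have hB13 : B f1 f3 = 0 := by
        simp only [hf1, hf3, map_add, LinearMap.add_apply, he1, he1u, he1w, hue1, huu, huw]
        have := h2K 1; linear_combination this
      have hB23 : B f2 f3 = 0 := by
        simp only [hf2, hf3, map_add, LinearMap.add_apply, he1, he1u, he1w, hwe1, hwu, hww]
        have := h2K 1; linear_combination this
      have hB21 : B f2 f1 = 0 := by rw [trace_symm]; exact hB12
      have hB31 : B f3 f1 = 0 := by rw [trace_symm]; exact hB13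
      have hB32 : B f3 f2 = 0 := by rw [trace_symm]; exact hB23
      have hf1W : f1 ∈ W := Submodule.add_mem _ he1W (hW₁W huW₁)
      have hf2W : f2 ∈ W := Submodule.add_mem _ he1W (hW₁W hwW₁)
      have hf3W : f3 ∈ W := Submodule.add_mem _ (Submodule.add_mem _ he1W (hW₁W huW₁)) (hW₁W hwW₁)
      -- peel f2 then f3
      obtain ⟨hndA, hrkA⟩ := step W hnd f2 hf2W hB22
      set WA := W ⊓ LinearMap.ker (B f2) with hWAdef
      have hf3WA : f3 ∈ WA := ⟨hf3W, hB23⟩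
      obtain ⟨hndB, hrkB⟩ := step WA hndA f3 hf3WA hB33
      set W₂ := WA ⊓ LinearMap.ker (B f3) with hW₂def
      have hW₂rk : finrank F ↥W₂ = k'' := by omega
      have hf1W₂ : f1 ∈ W₂ := ⟨⟨hf1W, hB21⟩, hB31⟩
      obtain ⟨v'', hv''W, hv''⟩ := IH k'' (by omega) W₂ hW₂rk hndB
        ⟨f1, hf1W₂, by rw [hB11]; exact one_ne_zero⟩
      have hv''W' : ∀ i, v'' i ∈ W := fun i => (hv''W i).1.1
      have h2perp : ∀ i, B f2 (v'' i) = 0 := fun i => (hv''W i).1.2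
      have h3perp : ∀ i, B f3 (v'' i) = 0 := fun i => (hv''W i).2
      refine ⟨Fin.cons f2 (Fin.cons f3 v''), ?_, ?_⟩
      · intro i
        refine Fin.cases hf2W (fun i' => Fin.cases hf3W (fun i'' => hv''W' i'') i') i
      · intro i j
        refine Fin.cases ?_ (fun i' => ?_) i
        · refine Fin.cases ?_ (fun j' => ?_) j
          · simp [hB22]
          · refine Fin.cases ?_ (fun j'' => ?_) j'
            · simp [hB23, (Fin.succ_ne_zero (0 : Fin (k''+1))).symm]
            · simp only [Fin.cons_zero, Fin.cons_succ]
              rw [h2perp j'', if_neg (Fin.succ_ne_zero _).symm]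
        · refine Fin.cases ?_ (fun j' => ?_) j
          · refine Fin.cases ?_ (fun i'' => ?_) i'
            · simp [hB32, Fin.succ_ne_zero]
            · simp only [Fin.cons_zero, Fin.cons_succ]
              rw [trace_symm, h2perp i'', if_neg (Fin.succ_ne_zero _)]
          · refine Fin.cases ?_ (fun i'' => ?_) i' <;>
              refine Fin.cases ?_ (fun j'' => ?_) j'
            · simp [hB33]
            · simp only [Fin.cons_succ, Fin.cons_zero]
              rw [h3perp j'', if_neg (by simp [Fin.ext_iff])]
            · simp only [Fin.cons_succ, Fin.cons_zero]
              rw [trace_symm, h3perp i'', if_neg (by simp [Fin.ext_iff])]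
            · simp only [Fin.cons_succ]
              rw [hv'' i'' j'']
              by_cases h : i'' = j'' <;> simp [h, Fin.succ_inj]

/-- binary diagonal forms over odd finite fields represent 1 -/
lemma binary_rep (hq : Fintype.card F % 2 = 1) {a b : F} (ha : a ≠ 0) (hb : b ≠ 0) :
    ∃ x y : F, a * x ^ 2 + b * y ^ 2 = 1 := by
  classical
  have hfa : (C a * X ^ 2 : F[X]).degree = 2 := by
    simpa using Polynomial.degree_C_mul_X_pow 2 ha
  have hfb : (C b * X ^ 2 : F[X]).degree = 2 := by
    simpa using Polynomial.degree_C_mul_X_pow 2 hb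
  have hgb : (C b * X ^ 2 - C 1 : F[X]).degree = 2 := by
    rw [Polynomial.degree_sub_eq_left_of_degree_lt, hfb]
    rw [Polynomial.degree_C one_ne_zero, hfb]
    norm_num
  obtain ⟨x, y, hxy⟩ := FiniteField.exists_root_sum_quadratic hfa hgb hq
  refine ⟨x, y, ?_⟩
  simp only [eval_add, eval_mul, eval_pow, eval_C, eval_X, eval_sub, eval_one] at hxy
  linear_combination hxy


lemma diag_to_one (hq : Fintype.card F % 2 = 1) :
    ∀ k (d : Fin k → F), (∀ i, d i ≠ 0) → IsSquare (∏ i, d i) →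
    ∃ w : Fin k → Fin k → F,
      ∀ i j, (∑ m, d m * (w i m * w j m)) = if i = j then 1 else 0 := by
  classical
  intro k
  induction k using Nat.strong_induction_on with
  | _ k IH =>
  intro d hd hsq
  match k with
  | 0 => exact ⟨fun i => i.elim0, fun i => i.elim0⟩
  | 1 =>
    obtain ⟨r, hr⟩ := hsq
    have hr' : d 0 = r * r := by rwa [Fin.prod_univ_one] at hr
    have hr0 : r ≠ 0 := by rintro rfl; exact hd 0 (by rw [hr', mul_zero])
    refine ⟨fun _ _ => r⁻¹, fun i j => ?_⟩
    have hij : i = j := Fin.ext (by omega)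
    rw [if_pos hij, Fin.sum_univ_one, hr']
    field_simp
  | (k'' + 2) =>
    set d0 := d 0 with hd0
    set d1 := d 1 with hd1
    set rest : Fin k'' → F := fun m => d m.succ.succ with hrest
    obtain ⟨x, y, hxy⟩ := binary_rep hq (hd 0) (hd 1)
    set d' : Fin (k'' + 1) → F := Fin.cons (d0 * d1) rest with hd'
    have hd'0 : ∀ i, d' i ≠ 0 := by
      intro i
      refine Fin.cases ?_ (fun i' => ?_) i
      · simpa [hd'] using mul_ne_zero (hd 0) (hd 1)
      · simpa [hd', hrest] using hd i'.succ.succ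
    have hprod : ∏ i, d' i = ∏ i, d i := by
      rw [Fin.prod_univ_succ, Fin.prod_univ_succ, Fin.prod_univ_succ]
      simp only [hd', Fin.cons_zero, Fin.cons_succ]
      simp only [Fin.succ_zero_eq_one]
      ring
    obtain ⟨w', hw'⟩ := IH (k'' + 1) (by omega) d' hd'0 (hprod ▸ hsq)
    -- the lift
    set T : (Fin (k'' + 1) → F) → (Fin (k'' + 2) → F) := fun c =>
      Fin.cons (c 0 * (d1 * y)) (Fin.cons (c 0 * (-(d0 * x))) (fun m => c m.succ)) with hT
    set s : Fin (k'' + 2) → F := Fin.cons x (Fin.cons y 0) with hs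
    have key : ∀ c c' : Fin (k'' + 1) → F,
        (∑ m, d m * (T c m * T c' m)) = ∑ m, d' m * (c m * c' m) := by
      intro c c'
      rw [Fin.sum_univ_succ, Fin.sum_univ_succ, Fin.sum_univ_succ]
      simp only [hT, hd', Fin.cons_zero, Fin.cons_succ]
      simp only [Fin.succ_zero_eq_one]
      linear_combination (d0 * d1 * c 0 * c' 0) * hxy
    have crossT : ∀ c : Fin (k'' + 1) → F, (∑ m, d m * (s m * T c m)) = 0 := by
      intro c
      rw [Fin.sum_univ_succ, Fin.sum_univ_succ]
      simp only [hT, hs, Fin.cons_zero, Fin.cons_succ]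
      simp only [Fin.succ_zero_eq_one, Pi.zero_apply]
      simp
      ring
    have ss : (∑ m, d m * (s m * s m)) = 1 := by
      rw [Fin.sum_univ_succ, Fin.sum_univ_succ]
      simp only [hs, Fin.cons_zero, Fin.cons_succ]
      simp only [Fin.succ_zero_eq_one, Pi.zero_apply]
      simp
      linear_combination hxy
    refine ⟨Fin.cons s (fun i => T (w' i)), fun i j => ?_⟩
    refine Fin.cases ?_ (fun i' => ?_) i
    · refine Fin.cases ?_ (fun j' => ?_) j
      · simp only [Fin.cons_zero]; rw [ss]; simp
      · simp only [Fin.cons_zero, Fin.cons_succ]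
        rw [crossT (w' j'), if_neg (Fin.succ_ne_zero j').symm]
    · refine Fin.cases ?_ (fun j' => ?_) j
      · simp only [Fin.cons_zero, Fin.cons_succ]
        rw [show (∑ m, d m * (T (w' i') m * s m)) = ∑ m, d m * (s m * T (w' i') m) by
          apply Finset.sum_congr rfl; intro m _; ring]
        rw [crossT (w' i'), if_neg (Fin.succ_ne_zero i')]
      · simp only [Fin.cons_succ]
        rw [key, hw' i' j']
        by_cases h : i' = j' <;> simp [h, Fin.succ_inj]

set_option maxHeartbeats 1000000 in
lemma orth_diag_square {N : ℕ} (hNrank : finrank F K = N) (hodd : Odd N)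
    (v : Basis (Fin N) F K)
    (horth : (Algebra.traceForm F K).iIsOrtho ⇑v) :
    IsSquare (∏ i, Algebra.traceForm F K (v i) (v i)) := by
  set q := Fintype.card F with hq
  have hq2 : 2 ≤ q := Fintype.one_lt_card
  set p := ringChar F with hp
  haveI hCF : CharP F p := ringChar.charP F
  obtain ⟨m, hpprime, hcard⟩ := FiniteField.card F p
  haveI hCK : CharP K p := charP_of_injective_algebraMap (algebraMap F K).injective p
  haveI hCE : CharP (AlgebraicClosure K) p :=
    charP_of_injective_algebraMap (algebraMap K (AlgebraicClosure K)).injective p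
  haveI : ExpChar K p := ExpChar.prime hpprime
  haveI : ExpChar (AlgebraicClosure K) p := ExpChar.prime hpprime
  have hfixF : ∀ (c : ℕ) (a : F), a ^ q ^ c = a := fun c a => FiniteField.pow_card_pow c a
  have hKN : ∀ z : K, z ^ q ^ N = z := by
    intro z
    rw [hq, ← hNrank, ← card_eq_pow_finrank (K := F) (V := K)]
    exact FiniteField.pow_card z
  have hexp : ∀ c : ℕ, p ^ (↑m * c) = q ^ c := by
    intro c; rw [hq, hcard, ← pow_mul]
  let σ : ℕ → (K →ₐ[F] K) := fun c =>
    { toRingHom := iterateFrobenius K p (↑m * c)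
      commutes' := by
        intro a
        show iterateFrobenius K p (↑m * c) (algebraMap F K a) = algebraMap F K a
        rw [iterateFrobenius_def, ← map_pow, hexp, hfixF c a] }
  have hσ : ∀ (c : ℕ) (z : K), σ c z = z ^ q ^ c := by
    intro c z
    show iterateFrobenius K p (↑m * c) z = _
    rw [iterateFrobenius_def, hexp]
  set ι := IsScalarTower.toAlgHom F K (AlgebraicClosure K) with hι
  let emb : ℕ → (K →ₐ[F] AlgebraicClosure K) := fun c => ι.comp (σ c)
  have hemb : ∀ (c : ℕ) (z : K), emb c z = ι (z ^ q ^ c) := by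
    intro c z
    show ι (σ c z) = _
    rw [hσ]
  have hιinj : Function.Injective ι := RingHom.injective (ι : K →+* AlgebraicClosure K)
  -- injectivity of the family
  have hinj : ∀ c₁ c₂ : ℕ, c₁ < c₂ → c₂ < N → emb c₁ ≠ emb c₂ := by
    intro c₁ c₂ hlt hc₂ heq
    have hKpow : ∀ z : K, z ^ q ^ c₁ = z ^ q ^ c₂ := by
      intro z
      have h1 := congrArg (fun f : K →ₐ[F] (AlgebraicClosure K) => f z) heq
      simp only [hemb] at h1
      exact hιinj h1
    have hsurj : Function.Surjective (fun z : K => z ^ q ^ c₁) := by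
      have h2 : (fun z : K => z ^ q ^ c₁) = ⇑(σ c₁) := funext fun z => (hσ c₁ z).symm
      rw [h2]
      exact Finite.surjective_of_injective (RingHom.injective ((σ c₁ : K →+* K)))
    have hall : ∀ y : K, y ^ q ^ (c₂ - c₁) = y := by
      intro y
      obtain ⟨z, rfl⟩ := hsurj y
      show (z ^ q ^ c₁) ^ q ^ (c₂ - c₁) = z ^ q ^ c₁
      rw [← pow_mul, ← pow_add, Nat.add_sub_cancel' (le_of_lt hlt)]
      exact (hKpow z).symm
    have hbound : Fintype.card K ≤ q ^ (c₂ - c₁) := by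
      calc Fintype.card K = Finset.univ.card (α := K) := (Finset.card_univ).symm
        _ ≤ q ^ (c₂ - c₁) := roots_bound _ (by
            calc (2:ℕ) = 2 ^ 1 := rfl
              _ ≤ q ^ 1 := Nat.pow_le_pow_left hq2 1
              _ ≤ q ^ (c₂ - c₁) := Nat.pow_le_pow_right (by omega) (by omega))
            Finset.univ (fun x _ => hall x)
    rw [card_eq_pow_finrank (K := F) (V := K), ← hq, hNrank] at hbound
    have := (Nat.pow_le_pow_iff_right hq2).mp hbound
    omega
  have hNpos : 0 < N := hNrank ▸ finrank_pos
  have hbij : Function.Bijective (fun k : Fin N => emb k.val) := by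
    rw [Fintype.bijective_iff_injective_and_card]
    refine ⟨?_, by rw [AlgHom.card F K (AlgebraicClosure K), hNrank, Fintype.card_fin]⟩
    intro k l hkl
    by_contra hne
    rcases Nat.lt_or_ge k.val l.val with h | h
    · exact hinj k.val l.val h l.isLt hkl
    · have h' : l.val < k.val := by
        rcases Nat.eq_or_lt_of_le h with h1 | h1
        · exact absurd (Fin.ext h1.symm) hne
        · exact h1
      exact hinj l.val k.val h' k.isLt hkl.symm
  let e : Fin N ≃ (K →ₐ[F] AlgebraicClosure K) := Equiv.ofBijective _ hbij
  set M := Algebra.embeddingsMatrixReindex F (AlgebraicClosure K) (⇑v) e with hM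
  have hMapply : ∀ i j, M i j = ι ((v i) ^ q ^ (j.val : ℕ)) := by
    intro i j
    show emb j.val (v i) = _
    rw [hemb]
  have hdiscr : algebraMap F (AlgebraicClosure K) (Algebra.discr F ⇑v) = M.det ^ 2 :=
    Algebra.discr_eq_det_embeddingsMatrixReindex_pow_two F (AlgebraicClosure K) (⇑v) e
  -- periodicity in K
  have hmod : ∀ (z : K) (c : ℕ), z ^ q ^ c = z ^ q ^ (c % N) := by
    intro z c
    induction c using Nat.strong_induction_on with
    | _ c IH =>
      rcases Nat.lt_or_ge c N with h | h
      · rw [Nat.mod_eq_of_lt h]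
      · have h1 : c = (c - N) + N := by omega
        have h2 : z ^ q ^ c = z ^ q ^ (c - N) := by
          conv_lhs => rw [h1]
          rw [pow_add, pow_mul, hKN (z ^ q ^ (c - N))]
        have h3 : c % N = (c - N) % N := Nat.mod_eq_sub_mod h
        rw [h2, IH (c - N) (by omega), h3]
  -- Frobenius of E
  set φ := iterateFrobenius (AlgebraicClosure K) p (↑m : ℕ) with hφ
  have hφdef : ∀ t : AlgebraicClosure K, φ t = t ^ q := by
    intro t; rw [hφ, iterateFrobenius_def, hq, hcard]
  have hrot : M.map φ = M.submatrix id (finRotate N) := by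
    ext i j
    rw [Matrix.map_apply, Matrix.submatrix_apply, id_eq, hMapply, hMapply, hφdef, ← map_pow,
      ← pow_mul, ← pow_succ, finRotate_val hNpos j]
    rw [hmod (v i) (j.val + 1)]
  have hdet : M.det ^ q = M.det := by
    have h1 : φ M.det = (M.map φ).det := RingHom.map_det φ M
    rw [hφdef] at h1
    rw [h1, hrot, Matrix.det_permute' (finRotate N) M, sign_finRotate_odd hodd]
    simp
  -- det M is in the image of F
  obtain ⟨c, hc⟩ : ∃ c : F, algebraMap F (AlgebraicClosure K) c = M.det := by
    classical
    set S : Finset (AlgebraicClosure K) :=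
      insert M.det (Finset.image (algebraMap F (AlgebraicClosure K)) Finset.univ) with hS
    have hSfix : ∀ t ∈ S, t ^ q = t := by
      intro t ht
      rcases Finset.mem_insert.mp ht with rfl | ht
      · exact hdet
      · obtain ⟨a, -, rfl⟩ := Finset.mem_image.mp ht
        rw [← map_pow]
        rw [hq, FiniteField.pow_card]
    have hcard2 : S.card ≤ q := roots_bound q hq2 S hSfix
    have himg : (Finset.image (algebraMap F (AlgebraicClosure K)) Finset.univ).card = q := by
      rw [Finset.card_image_of_injective _ (algebraMap F (AlgebraicClosure K)).injective,
        Finset.card_univ]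
    by_cases hmem : M.det ∈ Finset.image (algebraMap F (AlgebraicClosure K)) Finset.univ
    · obtain ⟨c, -, hc⟩ := Finset.mem_image.mp hmem
      exact ⟨c, hc⟩
    · exfalso
      rw [hS, Finset.card_insert_of_notMem hmem, himg] at hcard2
      omega
  have hdisc_sq : Algebra.discr F ⇑v = c * c := by
    apply (algebraMap F (AlgebraicClosure K)).injective
    rw [hdiscr, ← hc, map_mul, sq]
  have hdiag : Algebra.traceMatrix F ⇑v =
      Matrix.diagonal (fun i => Algebra.traceForm F K (v i) (v i)) := by
    ext i j
    by_cases h : i = j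
    · subst h; rw [Algebra.traceMatrix_apply, Matrix.diagonal_apply_eq]
    · rw [Algebra.traceMatrix_apply, Matrix.diagonal_apply_ne _ h]
      exact horth h
  have hfin : Algebra.discr F ⇑v = ∏ i, Algebra.traceForm F K (v i) (v i) := by
    rw [Algebra.discr_def, hdiag, Matrix.det_diagonal]
  exact ⟨c, by rw [← hfin, hdisc_sq]⟩

lemma odd_family (hq : Fintype.card F % 2 = 1) (hodd : Odd (finrank F K)) :
    ∃ v : Fin (finrank F K) → K,
      ∀ i j, Algebra.traceForm F K (v i) (v j) = if i = j then 1 else 0 := by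
  have h2 : (2 : F) ≠ 0 := by
    intro h
    have hdvd : ringChar F ∣ 2 := (ringChar.spec F 2).mp (by exact_mod_cast h)
    have hprime : (ringChar F).Prime := CharP.char_is_prime F (ringChar F)
    have : ringChar F = 2 := (Nat.prime_dvd_prime_iff_eq hprime Nat.prime_two).mp hdvd
    have := FiniteField.even_card_iff_char_two.mp this
    omega
  haveI : Invertible (2 : F) := invertibleOfNonzero h2
  have hsymm : (Algebra.traceForm F K).IsSymm := Algebra.traceForm_isSymm F (S := K)
  obtain ⟨v, horth⟩ := LinearMap.BilinForm.exists_orthogonal_basis (LinearMap.BilinForm.isSymm_iff.mp hsymm)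
  set B := Algebra.traceForm F K with hB
  set d : Fin (finrank F K) → F := fun i => B (v i) (v i) with hd
  have hd0 : ∀ i, d i ≠ 0 := by
    intro i
    exact LinearMap.BilinForm.iIsOrtho.not_isOrtho_basis_self_of_nondegenerate horth
      (traceForm_nondegenerate F K) i
  have hsq : IsSquare (∏ i, d i) := orth_diag_square rfl hodd v horth
  obtain ⟨w, hw⟩ := diag_to_one hq (finrank F K) d hd0 hsq
  refine ⟨fun i => ∑ m, w i m • v m, fun i j => ?_⟩
  have expand : B (∑ m, w i m • v m) (∑ m, w j m • v m) = ∑ m, d m * (w i m * w j m) := by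
    simp only [map_sum, LinearMap.sum_apply, map_smul, LinearMap.smul_apply, smul_eq_mul]
    refine Finset.sum_congr rfl (fun m _ => ?_)
    rw [Finset.sum_eq_single m]
    · rw [hd]; ring
    · intro l _ hl
      rw [horth hl]
      ring
    · intro hm; exact absurd (Finset.mem_univ m) hm
  rw [expand, hw i j]

end SelfDualAux

/-- Existence of self-dual bases of a finite field extension `K / F` with `|F| = q` and
`[K : F] = n`, when `q` is even or both `q` and `n` are odd. -/
theorem stmt3 (F K : Type*) [Field F] [Fintype F] [Field K] [Fintype K] [Algebra F K]
    (n : ℕ) (hn : Module.finrank F K = n)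
    (hpar : Even (Fintype.card F) ∨ (Odd (Fintype.card F) ∧ Odd n)) :
    ∃ b : Basis (Fin n) F K,
      ∀ i j : Fin n, Algebra.trace F K (b i * b j) = if i = j then 1 else 0 := by
  subst hn
  set B := Algebra.traceForm F K with hB
  obtain ⟨v, hv⟩ : ∃ v : Fin (finrank F K) → K,
      ∀ i j, B (v i) (v j) = if i = j then 1 else 0 := by
    rcases hpar with heven | ⟨hq, hnodd⟩
    · -- char 2
      have h2 : ringChar F = 2 :=
        FiniteField.even_card_iff_char_two.mpr (Nat.even_iff.mp heven)
      have hCF : CharP F 2 := by rw [← h2]; exact ringChar.charP F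
      have hCK : CharP K 2 := charP_of_injective_algebraMap (algebraMap F K).injective 2
      have h2K : ringChar K = 2 := ringChar.eq_iff.mpr hCK
      -- a nonisotropic vector
      have htr : Algebra.trace F K ≠ 0 := Algebra.trace_ne_zero F K
      obtain ⟨t, ht⟩ : ∃ t : K, Algebra.trace F K t ≠ 0 := by
        by_contra h; push_neg at h; exact htr (LinearMap.ext h)
      obtain ⟨s, hs⟩ := FiniteField.isSquare_of_char_two h2K t
      obtain ⟨v, -, hv⟩ := char2_family h2 (finrank F K) ⊤ (by simpa using finrank_top F K)
        (fun x _ h => (traceForm_nondegenerate F K).1 x (fun y => h y trivial))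
        ⟨s, trivial, by rwa [Algebra.traceForm_apply, ← hs]⟩
      exact ⟨v, hv⟩
    · exact odd_family (Nat.odd_iff.mp hq) hnodd
  have hpos : 0 < finrank F K := finrank_pos
  haveI : Nonempty (Fin (finrank F K)) := ⟨⟨0, hpos⟩⟩
  have hli : LinearIndependent F v := by
    apply LinearMap.BilinForm.linearIndependent_of_iIsOrtho (B := B)
    · intro i j hij
      have := hv i j
      rwa [if_neg hij] at this
    · intro i
      simp only [LinearMap.BilinForm.IsOrtho, hv i i, if_pos rfl]
      exact one_ne_zero
  refine ⟨basisOfLinearIndependentOfCardEqFinrank hli (by simp), fun i j => ?_⟩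
  rw [coe_basisOfLinearIndependentOfCardEqFinrank]
  simpa [hB, Algebra.traceForm_apply] using hv i j
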